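/- With V, B, Q, Z, z₀ and 𝒞⁺_ρ as in the context (Q negative semi-definite on the kernel of Z): the set 𝒞⁺_ρ is a convex cone, i.e., it is closed under addition (w₁, w₂ ∈ 𝒞⁺_ρ implies w₁ + w₂ ∈ 𝒞⁺_ρ) and under multiplication by positive real scalars (w ∈ 𝒞⁺_ρ and t > 0 implies t·w ∈ 𝒞⁺_ρ). -/
import Mathlib


namespace BridgelandNotes

variable {V : Type*} [AddCommGroup V] [Module ℝ V]

/-- The cone `𝒞⁺_ρ = {w ∈ V : Z(w) ∈ ρ and Q(w) ≥ 0}`, where `ρ = {t·z₀ : t > 0}`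
is the open ray through `z₀` and `Q(w) = B(w, w)`. -/
def posCone (B : V →ₗ[ℝ] V →ₗ[ℝ] ℝ) (Z : V →ₗ[ℝ] ℂ) (z₀ : ℂ) : Set V :=
  {w | (∃ t : ℝ, 0 < t ∧ Z w = t • z₀) ∧ 0 ≤ B w w}

/-- If the quadratic form `Q(w) = B(w,w)` is negative semi-definite on the kernel of
`Z`, then `𝒞⁺_ρ` is a convex cone: it is closed under addition and under
multiplication by positive real scalars. -/
theorem posCone_convex_cone (B : V →ₗ[ℝ] V →ₗ[ℝ] ℝ)
    (hsymm : ∀ x y : V, B x y = B y x)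
    (Z : V →ₗ[ℝ] ℂ) (hker : ∀ v : V, Z v = 0 → B v v ≤ 0)
    (z₀ : ℂ) (hz₀ : z₀ ≠ 0) :
    (∀ w₁ w₂ : V, w₁ ∈ posCone B Z z₀ → w₂ ∈ posCone B Z z₀ →
      w₁ + w₂ ∈ posCone B Z z₀) ∧
    (∀ w : V, w ∈ posCone B Z z₀ → ∀ t : ℝ, 0 < t → t • w ∈ posCone B Z z₀) := by
  constructor
  · rintro w₁ w₂ ⟨⟨t₁, ht₁, hZ₁⟩, hQ₁⟩ ⟨⟨t₂, ht₂, hZ₂⟩, hQ₂⟩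
    have hv : Z (t₂ • w₁ - t₁ • w₂) = 0 := by
      simp [map_sub, map_smul, hZ₁, hZ₂, smul_smul, mul_comm]; ring
    have hQv := hker _ hv
    have hexp : B (t₂ • w₁ - t₁ • w₂) (t₂ • w₁ - t₁ • w₂) =
        t₂ * t₂ * B w₁ w₁ - t₂ * t₁ * B w₁ w₂ - t₁ * t₂ * B w₂ w₁
          + t₁ * t₁ * B w₂ w₂ := by
      simp only [map_sub, map_smul, LinearMap.sub_apply, LinearMap.smul_apply,
        smul_eq_mul]
      ring
    have hB12 : 0 ≤ B w₁ w₂ := by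
      rw [hexp, hsymm w₂ w₁] at hQv
      nlinarith [mul_pos ht₁ ht₂, mul_nonneg (mul_nonneg ht₂.le ht₂.le) hQ₁,
        mul_nonneg (mul_nonneg ht₁.le ht₁.le) hQ₂]
    refine ⟨⟨t₁ + t₂, by linarith, ?_⟩, ?_⟩
    · simp [map_add, hZ₁, hZ₂, add_smul]
    · have : B (w₁ + w₂) (w₁ + w₂) = B w₁ w₁ + B w₁ w₂ + B w₂ w₁ + B w₂ w₂ := by
        simp only [map_add, LinearMap.add_apply]; ring
      rw [this, hsymm w₂ w₁]; linarith
  · rintro w ⟨⟨s, hs, hZ⟩, hQ⟩ t ht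
    refine ⟨⟨t * s, mul_pos ht hs, by simp [map_smul, hZ, smul_smul]; ring⟩, ?_⟩
    simp only [map_smul, LinearMap.smul_apply, smul_eq_mul]
    positivity

end BridgelandNotes
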